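/- Let k ≥ 2 and q ≥ 1 be integers, and let h(n) = ∑_{d | n} f(d)g(n/d) where f(d) = 1 if d is of the form k^{qn} (n ≥ 0) and 0 otherwise, and g(d) = b_k(m) if d = m^q for a positive integer m and 0 otherwise, with b_k(m) = 1−k if k | m and 1 otherwise. Then for every n ∈ ℕ, |h(n)| ≤ (k−1)((1/q) log_k n + 1). -/

import Mathlib

open scoped Classical

noncomputable def bAux (k n : ℕ) : ℤ := if k ∣ n then 1 - (k : ℤ) else 1

noncomputable def fAux (k q d : ℕ) : ℤ := if ∃ n : ℕ, d = k ^ (q * n) then 1 else 0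

noncomputable def gAux (k q d : ℕ) : ℤ :=
  if ∃ n : ℕ, 0 < n ∧ d = n ^ q ∧ k ∣ n then 1 - (k : ℤ)
  else if ∃ n : ℕ, 0 < n ∧ d = n ^ q then 1 else 0

noncomputable def hAux (k q n : ℕ) : ℤ :=
  ∑ d ∈ n.divisors, fAux k q d * gAux k q (n / d)

lemma gAux_abs_le (k q d : ℕ) (hk : 2 ≤ k) : |gAux k q d| ≤ (k : ℤ) - 1 := by
  have hk' : (2 : ℤ) ≤ (k : ℤ) := by exact_mod_cast hk
  unfold gAux
  split_ifs
  · rw [abs_sub_comm, abs_of_nonneg (by omega)]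
  · rw [abs_one]; omega
  · rw [abs_zero]; omega

lemma hAux_int_bound (k q n : ℕ) (hk : 2 ≤ k) (hq : 1 ≤ q) (hn : 1 ≤ n) :
    |hAux k q n| ≤ ((k : ℤ) - 1) * (Nat.log k n / q + 1 : ℕ) := by
  set L := Nat.log k n / q with hL
  have hterm : ∀ d ∈ n.divisors,
      |fAux k q d * gAux k q (n / d)| ≤
        (if ∃ m : ℕ, d = k ^ (q * m) then (k : ℤ) - 1 else 0) := by
    intro d _
    unfold fAux
    split_ifs with h
    · rw [one_mul]; exact gAux_abs_le k q (n / d) hk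
    · simp
  calc |hAux k q n| ≤ ∑ d ∈ n.divisors, |fAux k q d * gAux k q (n / d)| :=
        Finset.abs_sum_le_sum_abs _ _
    _ ≤ ∑ d ∈ n.divisors, (if ∃ m : ℕ, d = k ^ (q * m) then (k : ℤ) - 1 else 0) :=
        Finset.sum_le_sum hterm
    _ = ((n.divisors.filter (fun d => ∃ m : ℕ, d = k ^ (q * m))).card : ℤ) * ((k : ℤ) - 1) := by
        rw [Finset.sum_ite, Finset.sum_const, Finset.sum_const_zero, add_zero,
          nsmul_eq_mul]
    _ ≤ ((L + 1 : ℕ) : ℤ) * ((k : ℤ) - 1) := by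
        have hsub : n.divisors.filter (fun d => ∃ m : ℕ, d = k ^ (q * m)) ⊆
            (Finset.range (L + 1)).image (fun m => k ^ (q * m)) := by
          intro d hd
          rw [Finset.mem_filter] at hd
          obtain ⟨hd1, m, rfl⟩ := hd
          have hle : k ^ (q * m) ≤ n := Nat.le_of_dvd (by omega) (Nat.dvd_of_mem_divisors hd1)
          have hlog : q * m ≤ Nat.log k n := (Nat.le_log_iff_pow_le hk (by omega)).mpr hle
          have hm : m ≤ L := by
            rw [hL, Nat.le_div_iff_mul_le (by omega), mul_comm]
            exact hlog
          exact Finset.mem_image.mpr ⟨m, Finset.mem_range.mpr (by omega), rfl⟩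
        have hcard : (n.divisors.filter (fun d => ∃ m : ℕ, d = k ^ (q * m))).card ≤ L + 1 := by
          calc _ ≤ ((Finset.range (L + 1)).image (fun m => k ^ (q * m))).card :=
                Finset.card_le_card hsub
            _ ≤ (Finset.range (L + 1)).card := Finset.card_image_le
            _ = L + 1 := Finset.card_range _
        have hk' : (2 : ℤ) ≤ (k : ℤ) := by exact_mod_cast hk
        have : ((n.divisors.filter (fun d => ∃ m : ℕ, d = k ^ (q * m))).card : ℤ)
            ≤ ((L + 1 : ℕ) : ℤ) := by exact_mod_cast hcard
        nlinarith
    _ = ((k : ℤ) - 1) * ((L + 1 : ℕ) : ℤ) := mul_comm _ _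

/-- `|h(n)| ≤ (k-1)((1/q) log_k n + 1)`. -/
theorem stmt_4 (k q : ℕ) (hk : 2 ≤ k) (hq : 1 ≤ q) :
    ∀ n : ℕ, 1 ≤ n →
      |(hAux k q n : ℝ)| ≤
        ((k : ℝ) - 1) * ((1 / (q : ℝ)) * (Real.log n / Real.log k) + 1) := by
  intro n hn
  have hkR : (1 : ℝ) < (k : ℝ) := by exact_mod_cast (by omega : 1 < k)
  have hlogk : 0 < Real.log k := Real.log_pos hkR
  have hqR : (0 : ℝ) < q := by exact_mod_cast hq
  have hint := hAux_int_bound k q n hk hq hn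
  have h1 : |(hAux k q n : ℝ)| ≤ ((k : ℝ) - 1) * (((Nat.log k n / q : ℕ) : ℝ) + 1) := by
    have h := (@Int.cast_le ℝ _ _ _).mpr hint
    rw [Int.cast_abs] at h
    push_cast [-Int.natCast_ediv] at h
    convert h using 2
  -- Nat.log bound
  have h2 : (Nat.log k n : ℝ) ≤ Real.log n / Real.log k := by
    rw [le_div_iff₀ hlogk]
    have hpow : (k : ℕ) ^ Nat.log k n ≤ n := Nat.pow_log_le_self k (by omega)
    have hpowR : ((k : ℝ)) ^ Nat.log k n ≤ (n : ℝ) := by exact_mod_cast hpow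
    have := Real.log_le_log (by positivity) hpowR
    rwa [Real.log_pow] at this
  have h3 : ((Nat.log k n / q : ℕ) : ℝ) ≤ (1 / (q : ℝ)) * (Real.log n / Real.log k) := by
    calc ((Nat.log k n / q : ℕ) : ℝ) ≤ (Nat.log k n : ℝ) / (q : ℝ) := Nat.cast_div_le
      _ ≤ (Real.log n / Real.log k) / q := by gcongr
      _ = (1 / (q : ℝ)) * (Real.log n / Real.log k) := by ring
  have hk1 : (0 : ℝ) ≤ (k : ℝ) - 1 := by linarith
  calc |(hAux k q n : ℝ)| ≤ ((k : ℝ) - 1) * (((Nat.log k n / q : ℕ) : ℝ) + 1) := h1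
    _ ≤ ((k : ℝ) - 1) * ((1 / (q : ℝ)) * (Real.log n / Real.log k) + 1) := by
        apply mul_le_mul_of_nonneg_left _ hk1
        linarith [h3]
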